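/- Every subloop N of T_L is normal: for all x, y ∈ T_L one has x·N = N·x, (x·N)·y = x·(N·y), and N·(x·y) = (N·x)·y, where for subsets the product is taken elementwise (e.g. x·N = {x·n : n ∈ N}). -/

import Mathlib

/-- Iterated Cayley–Dickson doubling starting from `ℝ`. -/
def CD : ℕ → Type
  | 0 => ℝ
  | n + 1 => CD n × CD n

instance cdAddCommGroup : ∀ n, AddCommGroup (CD n)
  | 0 => inferInstanceAs (AddCommGroup ℝ)
  | n + 1 => letI := cdAddCommGroup n; inferInstanceAs (AddCommGroup (CD n × CD n))

noncomputable instance cdModule : ∀ n, Module ℝ (CD n)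
  | 0 => inferInstanceAs (Module ℝ ℝ)
  | n + 1 => letI := cdModule n; inferInstanceAs (Module ℝ (CD n × CD n))

/-- Cayley–Dickson conjugation, starting from the identity on `ℝ`. -/
def cdConj : ∀ n, CD n → CD n
  | 0, x => x
  | n + 1, x => (cdConj n x.1, -x.2)

/-- Cayley–Dickson multiplication: `(a,b)(c,d) = (ac − d b̄, ā d + c b)`. -/
def cdMul : ∀ n, CD n → CD n → CD n
  | 0, x, y => @Mul.mul ℝ _ x y
  | n + 1, x, y =>
      (cdMul n x.1 y.1 - cdMul n y.2 (cdConj n x.2),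
       cdMul n (cdConj n x.1) y.2 + cdMul n y.1 x.2)

instance cdMulInst (n : ℕ) : Mul (CD n) := ⟨cdMul n⟩

instance cdOne : ∀ n, One (CD n)
  | 0 => ⟨(1 : ℝ)⟩
  | n + 1 => letI := cdOne n; ⟨((1 : CD n), 0)⟩

/-- The standard basis elements: under a doubling step `A → A × A`, a basis element
`e k` of `A` gives `e k = (e k, 0)` and `e (k + dim A) = (0, e k)`. -/
def cdE : ∀ n, ℕ → CD n
  | 0, _ => (1 : ℝ)
  | n + 1, k => if k < 2 ^ n then (cdE n k, 0) else (0, cdE n (k - 2 ^ n))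

/-- The trigintaduonions: the 32-dimensional real Cayley–Dickson algebra. -/
abbrev TT := CD 5

/-- The 32 standard basis elements `e 0 = 1, e 1, …, e 31` of `𝕋`. -/
def e (i : ℕ) : TT := cdE 5 i

/-- The trigintaduonion loop `T_L = {±e 0, ±e 1, …, ±e 31}`. -/
def TL : Set TT := {x | ∃ i < 32, x = e i ∨ x = -e i}

/-- A subloop of `T_L`: a nonempty subset of `T_L` closed under multiplication. -/
def IsSubloop (N : Set TT) : Prop :=
  N ⊆ TL ∧ N.Nonempty ∧ ∀ x ∈ N, ∀ y ∈ N, x * y ∈ N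

/-- Two subsets of `T_L` are isomorphic (as loops) if some bijection between them
preserves multiplication. -/
def LoopIso (A B : Set TT) : Prop :=
  ∃ f : TT → TT, Set.BijOn f A B ∧ ∀ x ∈ A, ∀ y ∈ A, f (x * y) = f x * f y



-- ### aux: pair structure lemmas
theorem cd_pair_neg (n : ℕ) (x : CD (n+1)) : -x = ((-x.1, -x.2) : CD n × CD n) := rfl
theorem cd_pair_fst_neg (n : ℕ) (x : CD (n+1)) : (-x).1 = -x.1 := rfl
theorem cd_pair_ext (n : ℕ) (a b c d : CD n) :
    ((a, b) : CD (n+1)) = ((c, d) : CD n × CD n) ↔ a = c ∧ b = d := Prod.mk.injEq a b c d ▸ Iff.rfl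

theorem cd_conj_zero : ∀ n, cdConj n (0 : CD n) = 0
  | 0 => rfl
  | n + 1 => by
      show ((cdConj n (0 : CD (n+1)).1, -(0 : CD (n+1)).2) : CD n × CD n) = 0
      rw [show ((0 : CD (n+1)).1 : CD n) = 0 from rfl, show ((0 : CD (n+1)).2 : CD n) = 0 from rfl,
        cd_conj_zero n, neg_zero]
      rfl

theorem cd_conj_neg : ∀ n (x : CD n), cdConj n (-x) = -cdConj n x
  | 0, x => rfl
  | n + 1, x => by
      rw [cd_pair_neg n x]
      show ((cdConj n (-x.1), - -x.2) : CD n × CD n) = -((cdConj n x.1, -x.2) : CD n × CD n)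
      rw [Prod.neg_mk, cd_conj_neg n]

theorem cd_mul_neg : ∀ n (x y : CD n), cdMul n (-x) y = -cdMul n x y ∧ cdMul n x (-y) = -cdMul n x y
  | 0, x, y => by
      constructor
      · show @Mul.mul ℝ _ (@Neg.neg ℝ _ x) y = @Neg.neg ℝ _ (@Mul.mul ℝ _ x y)
        exact neg_mul _ _
      · show @Mul.mul ℝ _ x (@Neg.neg ℝ _ y) = @Neg.neg ℝ _ (@Mul.mul ℝ _ x y)
        exact mul_neg _ _
  | n + 1, x, y => by
      constructor
      · rw [cd_pair_neg n x]
        show ((cdMul n (-x.1) y.1 - cdMul n y.2 (cdConj n (-x.2)),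
               cdMul n (cdConj n (-x.1)) y.2 + cdMul n y.1 (-x.2)) : CD n × CD n)
          = -((cdMul n x.1 y.1 - cdMul n y.2 (cdConj n x.2),
               cdMul n (cdConj n x.1) y.2 + cdMul n y.1 x.2) : CD n × CD n)
        rw [Prod.neg_mk, cd_conj_neg n, cd_conj_neg n,
          (cd_mul_neg n x.1 y.1).1, (cd_mul_neg n y.2 (cdConj n x.2)).2,
          (cd_mul_neg n (cdConj n x.1) y.2).1, (cd_mul_neg n y.1 x.2).2]
        refine (cd_pair_ext n _ _ _ _).mpr ⟨by abel, by abel⟩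
      · rw [cd_pair_neg n y]
        show ((cdMul n x.1 (-y.1) - cdMul n (-y.2) (cdConj n x.2),
               cdMul n (cdConj n x.1) (-y.2) + cdMul n (-y.1) x.2) : CD n × CD n)
          = -((cdMul n x.1 y.1 - cdMul n y.2 (cdConj n x.2),
               cdMul n (cdConj n x.1) y.2 + cdMul n y.1 x.2) : CD n × CD n)
        rw [Prod.neg_mk, (cd_mul_neg n x.1 y.1).2, (cd_mul_neg n y.2 (cdConj n x.2)).1,
          (cd_mul_neg n (cdConj n x.1) y.2).2, (cd_mul_neg n y.1 x.2).1]
        refine (cd_pair_ext n _ _ _ _).mpr ⟨by abel, by abel⟩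

theorem cd_mul_zero : ∀ n (y : CD n), cdMul n y 0 = 0 ∧ cdMul n (0 : CD n) y = 0
  | 0, y => by
      constructor
      · show @Mul.mul ℝ _ y (@OfNat.ofNat ℝ 0 _) = @OfNat.ofNat ℝ 0 _
        exact mul_zero _
      · show @Mul.mul ℝ _ (@OfNat.ofNat ℝ 0 _) y = @OfNat.ofNat ℝ 0 _
        exact zero_mul _
  | n + 1, y => by
      have h1 : ((0 : CD (n+1)).1 : CD n) = 0 := rfl
      have h2 : ((0 : CD (n+1)).2 : CD n) = 0 := rfl
      constructor
      · show ((cdMul n y.1 (0:CD (n+1)).1 - cdMul n (0:CD (n+1)).2 (cdConj n y.2),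
               cdMul n (cdConj n y.1) (0:CD (n+1)).2 + cdMul n (0:CD (n+1)).1 y.2) : CD n × CD n) = 0
        rw [h1, h2, (cd_mul_zero n y.1).1, (cd_mul_zero n (cdConj n y.2)).2,
          (cd_mul_zero n (cdConj n y.1)).1, (cd_mul_zero n y.2).2]
        rw [sub_zero, add_zero]
        rfl
      · show ((cdMul n (0:CD (n+1)).1 y.1 - cdMul n y.2 (cdConj n (0:CD (n+1)).2),
               cdMul n (cdConj n (0:CD (n+1)).1) y.2 + cdMul n y.1 (0:CD (n+1)).2) : CD n × CD n) = 0
        rw [h1, h2, cd_conj_zero n, (cd_mul_zero n y.1).2, (cd_mul_zero n y.2).1,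
          (cd_mul_zero n y.2).2, (cd_mul_zero n y.1).1]
        rw [sub_zero, add_zero]
        rfl

theorem cdE_low (n k : ℕ) (h : k < 2 ^ n) : cdE (n+1) k = ((cdE n k, 0) : CD n × CD n) := by
  rw [cdE]; exact if_pos h

theorem cdE_high (n k : ℕ) (h : ¬ k < 2 ^ n) :
    cdE (n+1) k = ((0, cdE n (k - 2 ^ n)) : CD n × CD n) := by
  rw [cdE]; exact if_neg h

theorem cd_conj_E0 : ∀ n, cdConj n (cdE n 0) = cdE n 0
  | 0 => rfl
  | n + 1 => by
      rw [cdE_low n 0 (Nat.two_pow_pos n)]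
      show ((cdConj n (cdE n 0), -(0 : CD n)) : CD n × CD n) = _
      rw [cd_conj_E0 n, neg_zero]

theorem cd_one_mul : ∀ n (y : CD n), cdMul n (cdE n 0) y = y ∧ cdMul n y (cdE n 0) = y
  | 0, y => by
      constructor
      · show @Mul.mul ℝ _ (@OfNat.ofNat ℝ 1 _) y = y
        exact one_mul _
      · show @Mul.mul ℝ _ y (@OfNat.ofNat ℝ 1 _) = y
        exact mul_one _
  | n + 1, y => by
      have hl : cdE (n+1) 0 = ((cdE n 0, 0) : CD n × CD n) :=
        cdE_low n 0 (Nat.two_pow_pos n)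
      constructor
      · rw [hl]
        show ((cdMul n (cdE n 0) y.1 - cdMul n y.2 (cdConj n 0),
               cdMul n (cdConj n (cdE n 0)) y.2 + cdMul n y.1 0) : CD n × CD n) = y
        rw [cd_conj_zero n, cd_conj_E0 n, (cd_one_mul n y.1).1, (cd_one_mul n y.2).1,
          (cd_mul_zero n y.2).1, (cd_mul_zero n y.1).1, sub_zero, add_zero]
        rfl
      · rw [hl]
        show ((cdMul n y.1 (cdE n 0) - cdMul n 0 (cdConj n y.2),
               cdMul n (cdConj n y.1) 0 + cdMul n (cdE n 0) y.2) : CD n × CD n) = y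
        rw [(cd_one_mul n y.1).2, (cd_one_mul n y.2).1,
          (cd_mul_zero n (cdConj n y.2)).2, (cd_mul_zero n (cdConj n y.1)).1, sub_zero, zero_add]
        rfl

theorem cd_conj_E : ∀ n, ∀ i < 2 ^ n, cdConj n (cdE n i) = if i = 0 then cdE n 0 else -cdE n i
  | 0, i, hi => by
      interval_cases i
      simp only [if_pos rfl]
      rfl
  | n + 1, i, hi => by
      by_cases h : i < 2 ^ n
      · rw [cdE_low n i h]
        show ((cdConj n (cdE n i), -(0 : CD n)) : CD n × CD n) = _
        rw [neg_zero, cd_conj_E n i h]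
        by_cases h0 : i = 0
        · rw [if_pos h0, if_pos h0]
          exact (cdE_low n 0 (Nat.two_pow_pos n)).symm
        · rw [if_neg h0, if_neg h0]; erw [cd_pair_neg]
          dsimp only
          rw [neg_zero]
      · rw [cdE_high n i h]
        show ((cdConj n (0 : CD n), -(cdE n (i - 2 ^ n))) : CD n × CD n) = _
        have h0 : i ≠ 0 := by
          have := Nat.two_pow_pos n
          omega
        rw [cd_conj_zero n, if_neg h0]; erw [cd_pair_neg]
        dsimp only
        rw [neg_zero]

theorem cd_E_sq : ∀ n, ∀ i < 2 ^ n,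
    cdMul n (cdE n i) (cdConj n (cdE n i)) = cdE n 0 ∧
    (1 ≤ i → cdMul n (cdE n i) (cdE n i) = -cdE n 0)
  | 0, i, hi => by
      interval_cases i
      refine ⟨?_, by omega⟩
      show @Mul.mul ℝ _ (@OfNat.ofNat ℝ 1 _) (@OfNat.ofNat ℝ 1 _) = @OfNat.ofNat ℝ 1 _
      exact one_mul (1 : ℝ)
  | n + 1, i, hi => by
      have hE0 : cdE (n+1) 0 = ((cdE n 0, 0) : CD n × CD n) :=
        cdE_low n 0 (Nat.two_pow_pos n)
      by_cases h : i < 2 ^ n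
      · rw [cdE_low n i h]
        constructor
        · show cdMul (n+1) ((cdE n i, 0) : CD n × CD n)
              ((cdConj n (cdE n i), -(0:CD n)) : CD n × CD n) = cdE (n+1) 0
          show ((cdMul n (cdE n i) (cdConj n (cdE n i)) - cdMul n (-(0:CD n)) (cdConj n 0),
                 cdMul n (cdConj n (cdE n i)) (-(0:CD n)) + cdMul n (cdConj n (cdE n i)) 0)
                 : CD n × CD n) = cdE (n+1) 0
          rw [(cd_E_sq n i h).1, neg_zero, cd_conj_zero n, (cd_mul_zero n _).2,
            (cd_mul_zero n _).1, sub_zero, add_zero, hE0]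
        · intro h1
          show ((cdMul n (cdE n i) (cdE n i) - cdMul n (0:CD n) (cdConj n 0),
                 cdMul n (cdConj n (cdE n i)) (0:CD n) + cdMul n (cdE n i) 0) : CD n × CD n)
               = -cdE (n+1) 0
          rw [(cd_E_sq n i h).2 h1, cd_conj_zero n, (cd_mul_zero n _).2, (cd_mul_zero n _).1,
            (cd_mul_zero n _).1, sub_zero, add_zero, hE0]; erw [cd_pair_neg]
          dsimp only
          rw [neg_zero]
      · have h' : i - 2 ^ n < 2 ^ n := by
          have : (2:ℕ) ^ (n+1) = 2 ^ n + 2 ^ n := by ring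
          omega
        rw [cdE_high n i h]
        constructor
        · show cdMul (n+1) ((0, cdE n (i - 2^n)) : CD n × CD n)
              ((cdConj n (0:CD n), -cdE n (i - 2^n)) : CD n × CD n) = cdE (n+1) 0
          rw [cd_conj_zero n]
          show ((cdMul n 0 0 - cdMul n (-cdE n (i - 2^n)) (cdConj n (cdE n (i - 2^n))),
                 cdMul n (cdConj n (0:CD n)) (-cdE n (i - 2^n)) + cdMul n (0:CD n) (cdE n (i - 2^n)))
                 : CD n × CD n) = cdE (n+1) 0
          rw [cd_conj_zero n, (cd_mul_neg n _ _).1, (cd_E_sq n _ h').1,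
            (cd_mul_zero n _).2, (cd_mul_zero n _).2, (cd_mul_zero n _).2,
            zero_sub, neg_neg, add_zero, hE0]
        · intro _
          show ((cdMul n 0 0 - cdMul n (cdE n (i - 2^n)) (cdConj n (cdE n (i - 2^n))),
                 cdMul n (cdConj n (0:CD n)) (cdE n (i - 2^n)) + cdMul n (0:CD n) (cdE n (i - 2^n)))
                 : CD n × CD n) = -cdE (n+1) 0
          rw [cd_conj_zero n, (cd_E_sq n _ h').1, (cd_mul_zero n _).2, (cd_mul_zero n _).2,
            zero_sub, add_zero, hE0]; erw [cd_pair_neg]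
          dsimp only
          rw [neg_zero]

theorem xor_low_high {n i j : ℕ} (hi : i < 2 ^ n) (hj : j < 2 ^ n) :
    i ^^^ (2 ^ n + j) = 2 ^ n + (i ^^^ j) := by
  have hx : i ^^^ j < 2 ^ n := Nat.xor_lt_two_pow hi hj
  apply Nat.eq_of_testBit_eq
  intro m
  rcases lt_trichotomy m n with hm | hm | hm
  · rw [Nat.testBit_xor, Nat.testBit_two_pow_add_gt hm, Nat.testBit_two_pow_add_gt hm,
      Nat.testBit_xor]
  · subst hm
    rw [Nat.testBit_xor, Nat.testBit_two_pow_add_eq, Nat.testBit_two_pow_add_eq,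
      Nat.testBit_lt_two_pow hi, Nat.testBit_lt_two_pow hj, Nat.testBit_lt_two_pow hx]
    rfl
  · have h3 : 2 ^ n + 2 ^ n ≤ 2 ^ m := by
      calc 2 ^ n + 2 ^ n = 2 ^ (n+1) := by ring
        _ ≤ 2 ^ m := Nat.pow_le_pow_right (by norm_num) hm
    rw [Nat.testBit_xor, Nat.testBit_lt_two_pow (show i < 2 ^ m by omega),
      Nat.testBit_lt_two_pow (show 2 ^ n + j < 2 ^ m by omega),
      Nat.testBit_lt_two_pow (show 2 ^ n + (i ^^^ j) < 2 ^ m by omega)]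
    rfl

theorem xor_high_low {n i j : ℕ} (hi : i < 2 ^ n) (hj : j < 2 ^ n) :
    (2 ^ n + i) ^^^ j = 2 ^ n + (i ^^^ j) := by
  rw [Nat.xor_comm, xor_low_high hj hi, Nat.xor_comm]

theorem xor_high_high {n i j : ℕ} (hi : i < 2 ^ n) (hj : j < 2 ^ n) :
    (2 ^ n + i) ^^^ (2 ^ n + j) = i ^^^ j := by
  apply Nat.eq_of_testBit_eq
  intro m
  rcases lt_trichotomy m n with hm | hm | hm
  · rw [Nat.testBit_xor, Nat.testBit_two_pow_add_gt hm, Nat.testBit_two_pow_add_gt hm,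
      Nat.testBit_xor]
  · subst hm
    rw [Nat.testBit_xor, Nat.testBit_two_pow_add_eq, Nat.testBit_two_pow_add_eq,
      Nat.testBit_xor, Nat.testBit_lt_two_pow hi, Nat.testBit_lt_two_pow hj]
    rfl
  · have h3 : 2 ^ n + 2 ^ n ≤ 2 ^ m := by
      calc 2 ^ n + 2 ^ n = 2 ^ (n+1) := by ring
        _ ≤ 2 ^ m := Nat.pow_le_pow_right (by norm_num) hm
    rw [Nat.testBit_xor, Nat.testBit_lt_two_pow (show 2 ^ n + i < 2 ^ m by omega),
      Nat.testBit_lt_two_pow (show 2 ^ n + j < 2 ^ m by omega), Nat.testBit_xor,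
      Nat.testBit_lt_two_pow (show i < 2 ^ m by omega),
      Nat.testBit_lt_two_pow (show j < 2 ^ m by omega)]

def pm (n : ℕ) (x y : CD n) : Prop := x = y ∨ x = -y

theorem pm_refl (n : ℕ) (x : CD n) : pm n x x := Or.inl rfl

theorem pm_symm {n : ℕ} {x y : CD n} (h : pm n x y) : pm n y x := by
  rcases h with h | h
  · exact Or.inl h.symm
  · exact Or.inr (by rw [h, neg_neg])

theorem pm_trans {n : ℕ} {x y z : CD n} (h1 : pm n x y) (h2 : pm n y z) : pm n x z := by
  rcases h1 with h1 | h1 <;> rcases h2 with h2 | h2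
  · exact Or.inl (h1.trans h2)
  · exact Or.inr (h1.trans h2)
  · exact Or.inr (by rw [h1, h2])
  · exact Or.inl (by rw [h1, h2, neg_neg])

theorem pm_neg_left {n : ℕ} {x y : CD n} (h : pm n x y) : pm n (-x) y := by
  rcases h with h | h
  · exact Or.inr (by rw [h])
  · exact Or.inl (by rw [h, neg_neg])

theorem pm_mul {n : ℕ} {a a' b b' : CD n} (ha : pm n a a') (hb : pm n b b') :
    pm n (cdMul n a b) (cdMul n a' b') := by
  rcases ha with ha | ha <;> rcases hb with hb | hb <;> rw [ha, hb]
  · exact pm_refl n _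
  · exact Or.inr ((cd_mul_neg n a' b').2)
  · exact Or.inr ((cd_mul_neg n a' b').1)
  · exact Or.inl (by rw [(cd_mul_neg n a' (-b')).1, (cd_mul_neg n a' b').2, neg_neg])

theorem pm_pair_left {n : ℕ} {a b : CD n} (h : pm n a b) :
    pm (n+1) ((a, 0) : CD n × CD n) ((b, 0) : CD n × CD n) := by
  rcases h with h | h
  · exact Or.inl (by rw [h])
  · refine Or.inr ?_
    rw [h]; erw [cd_pair_neg]
    dsimp only
    rw [neg_zero]

theorem pm_pair_right {n : ℕ} {a b : CD n} (h : pm n a b) :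
    pm (n+1) ((0, a) : CD n × CD n) ((0, b) : CD n × CD n) := by
  rcases h with h | h
  · exact Or.inl (by rw [h])
  · refine Or.inr ?_
    rw [h]; erw [cd_pair_neg]
    dsimp only
    rw [neg_zero]

theorem pm_conj_E (n : ℕ) (i : ℕ) (hi : i < 2 ^ n) : pm n (cdConj n (cdE n i)) (cdE n i) := by
  rw [cd_conj_E n i hi]
  by_cases h0 : i = 0
  · rw [if_pos h0, h0]; exact pm_refl n _
  · rw [if_neg h0]; exact Or.inr rfl

theorem cd_E_mul : ∀ n, ∀ i < 2 ^ n, ∀ j < 2 ^ n,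
    pm n (cdMul n (cdE n i) (cdE n j)) (cdE n (i ^^^ j))
  | 0, i, hi, j, hj => by
      interval_cases i
      interval_cases j
      exact Or.inl (one_mul (1 : ℝ))
  | n + 1, i, hi, j, hj => by
      have hsum : (2:ℕ) ^ (n+1) = 2 ^ n + 2 ^ n := by ring
      by_cases h1 : i < 2 ^ n <;> by_cases h2 : j < 2 ^ n
      · -- both low
        rw [cdE_low n i h1, cdE_low n j h2]
        show pm (n+1) ((cdMul n (cdE n i) (cdE n j) - cdMul n 0 (cdConj n 0),
            cdMul n (cdConj n (cdE n i)) 0 + cdMul n (cdE n j) 0) : CD n × CD n) _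
        rw [cd_conj_zero n, (cd_mul_zero n _).2, (cd_mul_zero n _).1, (cd_mul_zero n _).1,
          sub_zero, add_zero, cdE_low n _ (Nat.xor_lt_two_pow h1 h2)]
        exact pm_pair_left (cd_E_mul n i h1 j h2)
      · -- i low, j high
        have hj' : j - 2 ^ n < 2 ^ n := by omega
        have hjeq : j = 2 ^ n + (j - 2 ^ n) := by omega
        rw [cdE_low n i h1, cdE_high n j h2]
        show pm (n+1) ((cdMul n (cdE n i) 0 - cdMul n (cdE n (j - 2^n)) (cdConj n 0),
            cdMul n (cdConj n (cdE n i)) (cdE n (j - 2^n)) + cdMul n 0 0) : CD n × CD n) _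
        rw [cd_conj_zero n, (cd_mul_zero n _).1, (cd_mul_zero n _).1, (cd_mul_zero n _).1,
          sub_zero, add_zero]
        have hx : i ^^^ j = 2 ^ n + (i ^^^ (j - 2 ^ n)) := by
          conv_lhs => rw [hjeq]
          exact xor_low_high h1 hj'
        rw [hx, cdE_high n _ (by omega), Nat.add_sub_cancel_left]
        exact pm_pair_right (pm_trans (pm_mul (pm_conj_E n i h1) (pm_refl n _))
          (cd_E_mul n i h1 _ hj'))
      · -- i high, j low
        have hi' : i - 2 ^ n < 2 ^ n := by omega
        have hieq : i = 2 ^ n + (i - 2 ^ n) := by omega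
        rw [cdE_high n i h1, cdE_low n j h2]
        show pm (n+1) ((cdMul n 0 (cdE n j) - cdMul n 0 (cdConj n (cdE n (i - 2^n))),
            cdMul n (cdConj n 0) 0 + cdMul n (cdE n j) (cdE n (i - 2^n))) : CD n × CD n) _
        rw [cd_conj_zero n, (cd_mul_zero n _).2, (cd_mul_zero n _).2, (cd_mul_zero n _).1,
          sub_zero, zero_add]
        have hx : i ^^^ j = 2 ^ n + ((i - 2 ^ n) ^^^ j) := by
          conv_lhs => rw [hieq]
          exact xor_high_low hi' h2
        rw [hx, cdE_high n _ (by omega), Nat.add_sub_cancel_left, Nat.xor_comm]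
        exact pm_pair_right (cd_E_mul n j h2 _ hi')
      · -- both high
        have hi' : i - 2 ^ n < 2 ^ n := by omega
        have hj' : j - 2 ^ n < 2 ^ n := by omega
        have hieq : i = 2 ^ n + (i - 2 ^ n) := by omega
        have hjeq : j = 2 ^ n + (j - 2 ^ n) := by omega
        rw [cdE_high n i h1, cdE_high n j h2]
        show pm (n+1) ((cdMul n 0 0 - cdMul n (cdE n (j - 2^n)) (cdConj n (cdE n (i - 2^n))),
            cdMul n (cdConj n 0) (cdE n (j - 2^n)) + cdMul n 0 (cdE n (i - 2^n))) : CD n × CD n) _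
        rw [cd_conj_zero n, (cd_mul_zero n _).2, (cd_mul_zero n _).2, (cd_mul_zero n _).2,
          zero_sub, add_zero]
        have hx : i ^^^ j = (j - 2 ^ n) ^^^ (i - 2 ^ n) := by
          conv_lhs => rw [hieq, hjeq]
          rw [xor_high_high hi' hj', Nat.xor_comm]
        rw [hx, cdE_low n _ (Nat.xor_lt_two_pow hj' hi')]
        exact pm_pair_left (pm_neg_left (pm_trans (pm_mul (pm_refl n _) (pm_conj_E n _ hi'))
          (cd_E_mul n _ hj' _ hi')))

theorem cdE_zero_eq_one : ∀ n, cdE n 0 = (1 : CD n)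
  | 0 => rfl
  | n + 1 => by
      rw [cdE_low n 0 (Nat.two_pow_pos n), cdE_zero_eq_one n]
      rfl

theorem mul_defT (x y : TT) : x * y = cdMul 5 x y := rfl
theorem e_defT (i : ℕ) : e i = cdE 5 i := rfl
theorem e0_one : e 0 = (1 : TT) := cdE_zero_eq_one 5

theorem one_mulT (y : TT) : 1 * y = y := by
  have := (cd_one_mul 5 y).1
  rw [cdE_zero_eq_one 5] at this
  exact this

theorem mul_oneT (y : TT) : y * 1 = y := by
  have := (cd_one_mul 5 y).2
  rw [cdE_zero_eq_one 5] at this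
  exact this

theorem neg_mulT (x y : TT) : -x * y = -(x * y) := (cd_mul_neg 5 x y).1
theorem mul_negT (x y : TT) : x * -y = -(x * y) := (cd_mul_neg 5 x y).2
theorem negone_mulT (y : TT) : (-1 : TT) * y = -y := by rw [neg_mulT, one_mulT]

theorem h25 : (2:ℕ) ^ 5 = 32 := by norm_num

theorem mem_TL_pm {x : TT} (hx : x ∈ TL) : ∃ i < 32, pm 5 x (e i) := hx

theorem pm_mulT {a a' b b' : TT} (ha : pm 5 a a') (hb : pm 5 b b') :
    pm 5 (a * b) (a' * b') := pm_mul ha hb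

theorem e_mul_pm {i j : ℕ} (hi : i < 32) (hj : j < 32) : pm 5 (e i * e j) (e (i ^^^ j)) :=
  cd_E_mul 5 i (h25 ▸ hi) j (h25 ▸ hj)

theorem keymul {x n : TT} (hx : x ∈ TL) (hn : n ∈ TL) : pm 5 (x * n) (n * x) := by
  obtain ⟨i, hi, hpi⟩ := mem_TL_pm hx
  obtain ⟨j, hj, hpj⟩ := mem_TL_pm hn
  refine pm_trans (pm_trans (pm_mulT hpi hpj) (e_mul_pm hi hj)) (pm_symm ?_)
  have := pm_trans (pm_mulT hpj hpi) (e_mul_pm hj hi)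
  rwa [Nat.xor_comm] at this

theorem keyassoc {x n y : TT} (hx : x ∈ TL) (hn : n ∈ TL) (hy : y ∈ TL) :
    pm 5 ((x * n) * y) (x * (n * y)) := by
  obtain ⟨i, hi, hpi⟩ := mem_TL_pm hx
  obtain ⟨j, hj, hpj⟩ := mem_TL_pm hn
  obtain ⟨k, hk, hpk⟩ := mem_TL_pm hy
  have hij : i ^^^ j < 32 := h25 ▸ Nat.xor_lt_two_pow (h25 ▸ hi) (h25 ▸ hj)
  have hjk : j ^^^ k < 32 := h25 ▸ Nat.xor_lt_two_pow (h25 ▸ hj) (h25 ▸ hk)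
  have hL : pm 5 ((x * n) * y) (e ((i ^^^ j) ^^^ k)) :=
    pm_trans (pm_mulT (pm_trans (pm_mulT hpi hpj) (e_mul_pm hi hj)) hpk) (e_mul_pm hij hk)
  have hR : pm 5 (x * (n * y)) (e (i ^^^ (j ^^^ k))) :=
    pm_trans (pm_mulT hpi (pm_trans (pm_mulT hpj hpk) (e_mul_pm hj hk))) (e_mul_pm hi hjk)
  rw [Nat.xor_assoc] at hL
  exact pm_trans hL (pm_symm hR)

theorem sqT {m : TT} (hm : m ∈ TL) (h1 : m ≠ 1) (h2 : m ≠ -1) : m * m = -1 := by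
  obtain ⟨i, hi, hc⟩ := hm
  have hi5 : i < 2 ^ 5 := h25 ▸ hi
  have hne0 : i ≠ 0 := by
    rintro rfl
    rcases hc with hc | hc
    · exact h1 (hc.trans e0_one)
    · exact h2 (by rw [hc, e0_one])
  have hsq : e i * e i = -(1 : TT) := by
    have := (cd_E_sq 5 i hi5).2 (by omega)
    rw [cdE_zero_eq_one 5] at this
    exact this
  rcases hc with hc | hc
  · rw [hc, hsq]
  · rw [hc, neg_mulT, mul_negT, neg_neg, hsq]

theorem subloop_cases {N : Set TT} (hN : IsSubloop N) :
    N = {1} ∨ ((1 : TT) ∈ N ∧ ∀ m ∈ N, -m ∈ N) := by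
  obtain ⟨hsub, ⟨n0, hn0⟩, hcl⟩ := hN
  -- if -1 ∈ N then 1 ∈ N and N is closed under negation
  have hstep : (-1 : TT) ∈ N → (1 : TT) ∈ N ∧ ∀ m ∈ N, -m ∈ N := by
    intro hm1
    have h1 : (1 : TT) ∈ N := by
      have := hcl _ hm1 _ hm1
      rwa [negone_mulT, neg_neg] at this
    exact ⟨h1, fun m hm => by
      have := hcl _ hm1 _ hm
      rwa [negone_mulT] at this⟩
  by_cases hall : ∀ m ∈ N, m = 1
  · left
    exact Set.eq_singleton_iff_unique_mem.mpr ⟨hall n0 hn0 ▸ hn0, hall⟩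
  · right
    push_neg at hall
    obtain ⟨m, hm, hm1⟩ := hall
    by_cases hm2 : m = -1
    · exact hstep (hm2 ▸ hm)
    · have : m * m = -1 := sqT (hsub hm) hm1 hm2
      exact hstep (this ▸ hcl _ hm _ hm)

theorem stmt5aux (N : Set TT) (hN : IsSubloop N) :
    ∀ x ∈ TL, ∀ y ∈ TL,
      (fun n => x * n) '' N = (fun n => n * x) '' N ∧
      (fun t => t * y) '' ((fun n => x * n) '' N) =
        (fun t => x * t) '' ((fun n => n * y) '' N) ∧
      (fun n => n * (x * y)) '' N = (fun t => t * y) '' ((fun n => n * x) '' N) := by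
  intro x hx y hy
  rcases subloop_cases hN with h1 | ⟨-, hneg⟩
  · subst h1
    refine ⟨?_, ?_, ?_⟩ <;>
      simp only [Set.image_singleton, one_mulT, mul_oneT]
  obtain ⟨hsub, -, -⟩ := hN
  refine ⟨?_, ?_, ?_⟩
  · ext z
    simp only [Set.mem_image]
    constructor
    · rintro ⟨n, hn, rfl⟩
      rcases keymul hx (hsub hn) with h | h
      · exact ⟨n, hn, h.symm⟩
      · exact ⟨-n, hneg n hn, by rw [neg_mulT, ← h]⟩
    · rintro ⟨n, hn, rfl⟩
      rcases keymul hx (hsub hn) with h | h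
      · exact ⟨n, hn, h⟩
      · exact ⟨-n, hneg n hn, by rw [mul_negT, h, neg_neg]⟩
  · ext z
    simp only [Set.mem_image, exists_exists_and_eq_and]
    constructor
    · rintro ⟨n, hn, rfl⟩
      rcases keyassoc hx (hsub hn) hy with h | h
      · exact ⟨n, hn, h.symm⟩
      · exact ⟨-n, hneg n hn, by rw [neg_mulT, mul_negT, ← h]⟩
    · rintro ⟨n, hn, rfl⟩
      rcases keyassoc hx (hsub hn) hy with h | h
      · exact ⟨n, hn, h⟩
      · exact ⟨-n, hneg n hn, by rw [mul_negT, neg_mulT, h, neg_neg]⟩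
  · ext z
    simp only [Set.mem_image, exists_exists_and_eq_and]
    constructor
    · rintro ⟨n, hn, rfl⟩
      rcases keyassoc (hsub hn) hx hy with h | h
      · exact ⟨n, hn, h⟩
      · exact ⟨-n, hneg n hn, by rw [neg_mulT, neg_mulT, h, neg_neg]⟩
    · rintro ⟨n, hn, rfl⟩
      rcases keyassoc (hsub hn) hx hy with h | h
      · exact ⟨n, hn, h.symm⟩
      · exact ⟨-n, hneg n hn, by rw [neg_mulT, ← h]⟩

/-- Every subloop `N` of `T_L` is normal: for all `x, y ∈ T_L`, `x·N = N·x`,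
`(x·N)·y = x·(N·y)` and `N·(x·y) = (N·x)·y`, products of sets being elementwise. -/
theorem stmt5 (N : Set TT) (hN : IsSubloop N) :
    ∀ x ∈ TL, ∀ y ∈ TL,
      (fun n => x * n) '' N = (fun n => n * x) '' N ∧
      (fun t => t * y) '' ((fun n => x * n) '' N) =
        (fun t => x * t) '' ((fun n => n * y) '' N) ∧
      (fun n => n * (x * y)) '' N = (fun t => t * y) '' ((fun n => n * x) '' N) :=
  stmt5aux N hN
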